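/- For 1 < p < ∞ and μ ∈ [0,1], there is a constant c = c(n,p) > 0 such that for all ξ, η ∈ ℝⁿ with ξ ≠ η, c⁻¹ (μ² + |ξ|² + |η|²)^((p-2)/2) ≤ |V_p(ξ) - V_p(η)|² / |ξ - η|² ≤ c (μ² + |ξ|² + |η|²)^((p-2)/2). -/

import Mathlib

open MeasureTheory Metric

/-- The auxiliary map `V_p(ξ) = (μ² + |ξ|²)^((p-2)/4) ξ`. -/
noncomputable def Vp {n : ℕ} (p μ : ℝ) (ξ : EuclideanSpace ℝ (Fin n)) :
    EuclideanSpace ℝ (Fin n) :=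
  ((μ ^ 2 + ‖ξ‖ ^ 2) ^ ((p - 2) / 4)) • ξ

open Real

/-- Convex tangent-line bound: for `q ≥ 1`, `x^q - y^q ≤ q * x^(q-1) * (x - y)`. -/
lemma aux_tangent_ge {q x y : ℝ} (hq : 1 ≤ q) (hx : 0 < x) (hy : 0 ≤ y) :
    x ^ q - y ^ q ≤ q * x ^ (q - 1) * (x - y) := by
  have hs : (-1 : ℝ) ≤ y / x - 1 := by
    have : 0 ≤ y / x := div_nonneg hy hx.le
    linarith
  have h := one_add_mul_self_le_rpow_one_add hs hq
  rw [show 1 + (y / x - 1) = y / x by ring, Real.div_rpow hy hx.le] at h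
  have hxq : 0 < x ^ q := rpow_pos_of_pos hx q
  have h3 := mul_le_mul_of_nonneg_left h hxq.le
  have hxq1 : x ^ (q - 1) = x ^ q / x := Real.rpow_sub_one hx.ne' q
  rw [mul_div_cancel₀ _ hxq.ne'] at h3
  rw [hxq1]
  have : x ^ q * (1 + q * (y / x - 1)) = x ^ q + q * (x ^ q / x) * (y - x) := by
    field_simp
  linarith [this ▸ h3]

/-- Concave tangent-line bound: for `0 ≤ b ≤ 1`, `y^b ≤ x^b + b * x^(b-1) * (y - x)`. -/
lemma aux_tangent_le {b x y : ℝ} (hb0 : 0 ≤ b) (hb1 : b ≤ 1) (hx : 0 < x) (hy : 0 ≤ y) :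
    y ^ b ≤ x ^ b + b * x ^ (b - 1) * (y - x) := by
  have hs : (-1 : ℝ) ≤ y / x - 1 := by
    have : 0 ≤ y / x := div_nonneg hy hx.le
    linarith
  have h := rpow_one_add_le_one_add_mul_self hs hb0 hb1
  rw [show 1 + (y / x - 1) = y / x by ring, Real.div_rpow hy hx.le] at h
  have hxb : 0 < x ^ b := rpow_pos_of_pos hx b
  have h3 := mul_le_mul_of_nonneg_left h hxb.le
  rw [mul_div_cancel₀ _ hxb.ne'] at h3
  have hxb1 : x ^ (b - 1) = x ^ b / x := Real.rpow_sub_one hx.ne' b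
  rw [hxb1]
  have : x ^ b * (1 + b * (y / x - 1)) = x ^ b + b * (x ^ b / x) * (y - x) := by
    field_simp
  linarith [this ▸ h3]

/-- Monotonicity of `t ↦ (μ²+t²)^q t` for `q > -1/2`. -/
lemma aux_mono {q μ r s : ℝ} (hq : -(1/2) < q) (hr : 0 ≤ r) (hrs : r ≤ s) :
    (μ ^ 2 + r ^ 2) ^ q * r ≤ (μ ^ 2 + s ^ 2) ^ q * s := by
  have hs : 0 ≤ s := hr.trans hrs
  rcases le_or_gt 0 q with hq0 | hq0
  · exact mul_le_mul (Real.rpow_le_rpow (by positivity) (by nlinarith) hq0) hrs hr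
      (Real.rpow_nonneg (by positivity) q)
  · rcases eq_or_lt_of_le hr with hr0 | hr0
    · rw [← hr0]; simp; positivity
    · have hb0 : (0:ℝ) < μ ^ 2 + r ^ 2 := by positivity
      have hB : (0:ℝ) < μ ^ 2 + s ^ 2 := by nlinarith
      set γ : ℝ := -(2*q) with hγ
      have hγ0 : 0 < γ := by simp [hγ]; linarith
      have hγ1 : γ ≤ 1 := by simp [hγ]; linarith
      -- key : (B)^γ ≤ (B/b₀) * b₀^γ
      have hdiv : (1:ℝ) ≤ (μ ^ 2 + s ^ 2) / (μ ^ 2 + r ^ 2) := by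
        rw [le_div_iff₀ hb0]; nlinarith
      have key : (μ ^ 2 + s ^ 2) ^ γ ≤ ((μ ^ 2 + s ^ 2) / (μ ^ 2 + r ^ 2)) * (μ ^ 2 + r ^ 2) ^ γ := by
        have h1 : (μ ^ 2 + s ^ 2) ^ γ
            = ((μ ^ 2 + s ^ 2) / (μ ^ 2 + r ^ 2)) ^ γ * (μ ^ 2 + r ^ 2) ^ γ := by
          rw [← Real.mul_rpow (by positivity) hb0.le, div_mul_cancel₀ _ hb0.ne']
        have h2 : ((μ ^ 2 + s ^ 2) / (μ ^ 2 + r ^ 2)) ^ γ ≤ (μ ^ 2 + s ^ 2) / (μ ^ 2 + r ^ 2) := by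
          calc ((μ ^ 2 + s ^ 2) / (μ ^ 2 + r ^ 2)) ^ γ
              ≤ ((μ ^ 2 + s ^ 2) / (μ ^ 2 + r ^ 2)) ^ (1:ℝ) :=
                Real.rpow_le_rpow_of_exponent_le hdiv hγ1
            _ = _ := Real.rpow_one _
        calc (μ ^ 2 + s ^ 2) ^ γ = _ := h1
          _ ≤ _ := mul_le_mul_of_nonneg_right h2 (Real.rpow_nonneg hb0.le γ)
      -- squares inequality : r² * B^γ ≤ s² * b₀^γ
      have hsq : r ^ 2 * (μ ^ 2 + s ^ 2) ^ γ ≤ s ^ 2 * (μ ^ 2 + r ^ 2) ^ γ := by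
        calc r ^ 2 * (μ ^ 2 + s ^ 2) ^ γ
            ≤ r ^ 2 * (((μ ^ 2 + s ^ 2) / (μ ^ 2 + r ^ 2)) * (μ ^ 2 + r ^ 2) ^ γ) :=
              mul_le_mul_of_nonneg_left key (by positivity)
          _ ≤ s ^ 2 * (μ ^ 2 + r ^ 2) ^ γ := by
              rw [div_mul_eq_mul_div, mul_div_assoc', div_le_iff₀ hb0]
              have hRγ := Real.rpow_nonneg hb0.le γ
              nlinarith [hRγ, mul_le_mul_of_nonneg_right
                (show r ^ 2 * (μ ^ 2 + s ^ 2) ≤ s ^ 2 * (μ ^ 2 + r ^ 2) by nlinarith [mul_le_mul_of_nonneg_left (show r ^ 2 ≤ s ^ 2 by nlinarith) (sq_nonneg μ)]) hRγ]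
      -- now conclude
      have hbγ : (0:ℝ) < (μ ^ 2 + r ^ 2) ^ γ := rpow_pos_of_pos hb0 γ
      have hBγ : (0:ℝ) < (μ ^ 2 + s ^ 2) ^ γ := rpow_pos_of_pos hB γ
      have hbq : (μ ^ 2 + r ^ 2) ^ q > 0 := rpow_pos_of_pos hb0 q
      have hBq : (μ ^ 2 + s ^ 2) ^ q > 0 := rpow_pos_of_pos hB q
      have hbid : ((μ ^ 2 + r ^ 2) ^ q) ^ 2 * (μ ^ 2 + r ^ 2) ^ γ = 1 := by
        rw [← Real.rpow_natCast ((μ ^ 2 + r ^ 2) ^ q) 2, ← Real.rpow_mul hb0.le,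
          ← Real.rpow_add hb0, show q * (2:ℕ) + γ = 0 by rw [hγ]; push_cast; ring]
        exact Real.rpow_zero _
      have hBid : ((μ ^ 2 + s ^ 2) ^ q) ^ 2 * (μ ^ 2 + s ^ 2) ^ γ = 1 := by
        rw [← Real.rpow_natCast ((μ ^ 2 + s ^ 2) ^ q) 2, ← Real.rpow_mul hB.le,
          ← Real.rpow_add hB, show q * (2:ℕ) + γ = 0 by rw [hγ]; push_cast; ring]
        exact Real.rpow_zero _
      -- (b*r)² ≤ (a*s)²
      have h2 : ((μ ^ 2 + r ^ 2) ^ q * r) ^ 2 ≤ ((μ ^ 2 + s ^ 2) ^ q * s) ^ 2 := by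
        have e1 : ((μ ^ 2 + r ^ 2) ^ q * r) ^ 2 * ((μ ^ 2 + r ^ 2) ^ γ * (μ ^ 2 + s ^ 2) ^ γ)
            = r ^ 2 * (μ ^ 2 + s ^ 2) ^ γ := by
          have : ((μ ^ 2 + r ^ 2) ^ q * r) ^ 2 * ((μ ^ 2 + r ^ 2) ^ γ * (μ ^ 2 + s ^ 2) ^ γ)
              = (((μ ^ 2 + r ^ 2) ^ q) ^ 2 * (μ ^ 2 + r ^ 2) ^ γ) * (r ^ 2 * (μ ^ 2 + s ^ 2) ^ γ) := by
            ring
          rw [this, hbid, one_mul]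
        have e2 : ((μ ^ 2 + s ^ 2) ^ q * s) ^ 2 * ((μ ^ 2 + r ^ 2) ^ γ * (μ ^ 2 + s ^ 2) ^ γ)
            = s ^ 2 * (μ ^ 2 + r ^ 2) ^ γ := by
          have : ((μ ^ 2 + s ^ 2) ^ q * s) ^ 2 * ((μ ^ 2 + r ^ 2) ^ γ * (μ ^ 2 + s ^ 2) ^ γ)
              = (((μ ^ 2 + s ^ 2) ^ q) ^ 2 * (μ ^ 2 + s ^ 2) ^ γ) * (s ^ 2 * (μ ^ 2 + r ^ 2) ^ γ) := by
            ring
          rw [this, hBid, one_mul]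
        have hpos : 0 < (μ ^ 2 + r ^ 2) ^ γ * (μ ^ 2 + s ^ 2) ^ γ := by positivity
        rw [← mul_le_mul_iff_of_pos_right hpos, e1, e2]
        exact hsq
      have h1nn : 0 ≤ (μ ^ 2 + r ^ 2) ^ q * r := by positivity
      have h2nn : 0 ≤ (μ ^ 2 + s ^ 2) ^ q * s := by positivity
      nlinarith [h2, h1nn, h2nn]

set_option maxHeartbeats 1000000 in
/-- Core scalar estimate: `cL·B^q(s-r) ≤ B^q s - b₀^q r ≤ CU·B^q(s-r)` where
`B = μ²+s²`, `b₀ = μ²+r²`, uniformly in `μ, r ≤ s`. -/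
lemma aux_core (q : ℝ) (hq : -(1/4) < q) :
    ∃ cL > (0:ℝ), ∃ CU > (0:ℝ), ∀ μ s r : ℝ, 0 ≤ r → r ≤ s → 0 < s →
      cL * ((μ^2+s^2) ^ q * (s - r)) ≤ (μ^2+s^2) ^ q * s - (μ^2+r^2) ^ q * r ∧
      (μ^2+s^2) ^ q * s - (μ^2+r^2) ^ q * r ≤ CU * ((μ^2+s^2) ^ q * (s - r)) := by
  rcases le_or_gt 0 q with hq0 | hq0
  · -- case q ≥ 0
    refine ⟨(4:ℝ)^(-q)/2, by positivity, 3 + 2*q, by linarith, ?_⟩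
    intro μ s r hr hrs hs
    have hB : (0:ℝ) < μ^2+s^2 := by positivity
    have hb0 : (0:ℝ) ≤ μ^2+r^2 := by positivity
    have ha : (0:ℝ) < (μ^2+s^2)^q := rpow_pos_of_pos hB q
    have hb : (0:ℝ) ≤ (μ^2+r^2)^q := Real.rpow_nonneg hb0 q
    have hba : (μ^2+r^2)^q ≤ (μ^2+s^2)^q := Real.rpow_le_rpow hb0 (by nlinarith) hq0
    have h4q : (4:ℝ)^(-q) ≤ 1 :=
      Real.rpow_le_one_of_one_le_of_nonpos (by norm_num) (by linarith)
    have h4qpos : (0:ℝ) < (4:ℝ)^(-q) := rpow_pos_of_pos (by norm_num) _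
    constructor
    · -- lower bound
      rcases le_or_gt r (s/2) with hcase | hcase
      · have h1 : (μ^2+r^2)^q * r ≤ (μ^2+s^2)^q * (s/2) :=
          mul_le_mul hba hcase hr ha.le
        nlinarith [mul_nonneg (mul_nonneg (sub_nonneg.2 h4q) ha.le) (sub_nonneg.2 hrs),
          mul_nonneg ha.le hr]
      · have hb4 : (μ^2+s^2)/4 ≤ μ^2+r^2 := by nlinarith
        have h1 : ((μ^2+s^2)/4)^q ≤ (μ^2+r^2)^q :=
          Real.rpow_le_rpow (by positivity) hb4 hq0
        have h2 : ((μ^2+s^2)/4)^q = (μ^2+s^2)^q * (4:ℝ)^(-q) := by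
          rw [Real.div_rpow hB.le (by norm_num), Real.rpow_neg (by norm_num), div_eq_mul_inv]
        have h3 : (μ^2+s^2)^q * (4:ℝ)^(-q) * (s - r) ≤ (μ^2+r^2)^q * (s-r) := by
          apply mul_le_mul_of_nonneg_right _ (by linarith)
          rw [← h2]; exact h1
        have h4 : (μ^2+r^2)^q * (s-r) ≤ (μ^2+s^2)^q * s - (μ^2+r^2)^q * r := by
          nlinarith [mul_le_mul_of_nonneg_right hba hs.le]
        nlinarith [mul_nonneg (mul_nonneg h4qpos.le ha.le) (sub_nonneg.2 hrs)]
    · -- upper bound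
      have hBq1 : (0:ℝ) ≤ (μ^2+s^2)^(q-1) := Real.rpow_nonneg hB.le _
      have hBid : (μ^2+s^2)^(q-1) * (μ^2+s^2) = (μ^2+s^2)^q := by
        rw [Real.rpow_sub_one hB.ne']; field_simp
      have hdiff : (μ^2+s^2)^q - (μ^2+r^2)^q
          ≤ (1+q) * ((μ^2+s^2)^(q-1) * (s^2 - r^2)) := by
        rcases le_or_gt 1 q with hq1 | hq1
        · have h := aux_tangent_ge hq1 hB hb0
          have h2 : (0:ℝ) ≤ (μ^2+s^2)^(q-1) * (s^2-r^2) := by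
            apply mul_nonneg hBq1; nlinarith
          have e : (μ^2+s^2) - (μ^2+r^2) = s^2 - r^2 := by ring
          rw [e] at h
          nlinarith
        · -- 0 ≤ q ≤ 1 : B^q - b₀^q ≤ B^(q-1)(B-b₀)
          have key : (μ^2+r^2) * (μ^2+s^2)^(q-1) ≤ (μ^2+r^2)^q := by
            rcases eq_or_lt_of_le hb0 with h0 | h0
            · rw [← h0]; simp [Real.rpow_nonneg]
            · have h1 : (μ^2+s^2)^(q-1) ≤ (μ^2+r^2)^(q-1) :=
                Real.rpow_le_rpow_of_nonpos h0 (by nlinarith) (by linarith)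
              have h2 : (μ^2+r^2) * (μ^2+r^2)^(q-1) = (μ^2+r^2)^q := by
                rw [Real.rpow_sub_one h0.ne']; field_simp
              calc (μ^2+r^2) * (μ^2+s^2)^(q-1) ≤ (μ^2+r^2) * (μ^2+r^2)^(q-1) :=
                    mul_le_mul_of_nonneg_left h1 hb0
                _ = (μ^2+r^2)^q := h2
          have h2 : (0:ℝ) ≤ (μ^2+s^2)^(q-1) * (s^2-r^2) := by
            apply mul_nonneg hBq1; nlinarith
          have e3 : (μ^2+s^2)^(q-1) * (s^2-r^2)
              = (μ^2+s^2)^q - (μ^2+r^2)*(μ^2+s^2)^(q-1) := by rw [← hBid]; ring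
          linarith [key, mul_nonneg hq0 h2]
      have h6 : ((μ^2+s^2)^q - (μ^2+r^2)^q) * r
          ≤ (1+q) * ((μ^2+s^2)^(q-1) * ((s^2-r^2) * r)) := by
        have h6a := mul_le_mul_of_nonneg_right hdiff hr
        calc ((μ^2+s^2)^q - (μ^2+r^2)^q) * r
            ≤ (1+q) * ((μ^2+s^2)^(q-1) * (s^2 - r^2)) * r := h6a
          _ = (1+q) * ((μ^2+s^2)^(q-1) * ((s^2-r^2) * r)) := by ring
      have h8 : (s^2-r^2)*r ≤ 2*(μ^2+s^2)*(s-r) := by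
        nlinarith [mul_le_mul_of_nonneg_right
          (show (s+r)*r ≤ 2*(μ^2+s^2) by nlinarith) (sub_nonneg.2 hrs)]
      have h7 : (μ^2+s^2)^(q-1) * ((s^2-r^2) * r) ≤ 2*((μ^2+s^2)^q*(s-r)) := by
        calc (μ^2+s^2)^(q-1) * ((s^2-r^2) * r)
            ≤ (μ^2+s^2)^(q-1) * (2*(μ^2+s^2)*(s-r)) :=
              mul_le_mul_of_nonneg_left h8 hBq1
          _ = 2*(((μ^2+s^2)^(q-1) * (μ^2+s^2))*(s-r)) := by ring
          _ = 2*((μ^2+s^2)^q*(s-r)) := by rw [hBid]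
      have h9 := mul_le_mul_of_nonneg_left h7 (show (0:ℝ) ≤ 1+q by linarith)
      linarith [h6, h9]
  · -- case -1/4 < q < 0
    refine ⟨1/4, by norm_num, 1, by norm_num, ?_⟩
    intro μ s r hr hrs hs
    have hB : (0:ℝ) < μ^2+s^2 := by positivity
    have ha : (0:ℝ) < (μ^2+s^2)^q := rpow_pos_of_pos hB q
    rcases eq_or_lt_of_le hr with hr0 | hr0
    · rw [← hr0]
      constructor
      · nlinarith [mul_nonneg ha.le hs.le]
      · simp
    · -- r > 0
      have hb0 : (0:ℝ) < μ^2+r^2 := by positivity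
      have hb : (0:ℝ) < (μ^2+r^2)^q := rpow_pos_of_pos hb0 q
      have hab : (μ^2+s^2)^q ≤ (μ^2+r^2)^q :=
        Real.rpow_le_rpow_of_nonpos hb0 (by nlinarith) hq0.le
      constructor
      · -- lower bound
        rcases le_or_gt r (s/2) with hcase | hcase
        · have hm := aux_mono (μ := μ) (s := s/2) (show -(1/2) < q by linarith) hr hcase
          have h2 : (μ^2+(s/2)^2)^q ≤ ((μ^2+s^2)/4)^q := by
            apply Real.rpow_le_rpow_of_nonpos (by positivity) (by nlinarith) hq0.le
          have h3 : ((μ^2+s^2)/4)^q = (μ^2+s^2)^q * (4:ℝ)^(-q) := by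
            rw [Real.div_rpow hB.le (by norm_num), Real.rpow_neg (by norm_num), div_eq_mul_inv]
          have h4 : (4:ℝ)^(-q) ≤ 3/2 := by
            have h5 : (4:ℝ)^(-q) ≤ (4:ℝ)^((4:ℝ)⁻¹) :=
              Real.rpow_le_rpow_of_exponent_le (by norm_num) (by linarith)
            have h6 : ((4:ℝ)^((4:ℝ)⁻¹))^(4:ℕ) = 4 := by
              rw [← Real.rpow_natCast ((4:ℝ)^((4:ℝ)⁻¹)) 4, ← Real.rpow_mul (by norm_num)]
              norm_num
            have h7 : ((4:ℝ)^((4:ℝ)⁻¹)) ≤ 3/2 := by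
              have h8 : ((4:ℝ)^((4:ℝ)⁻¹))^(4:ℕ) ≤ (3/2:ℝ)^(4:ℕ) := by rw [h6]; norm_num
              exact le_of_pow_le_pow_left₀ (by norm_num) (by norm_num) h8
            linarith
          -- b*r ≤ a * 4^{-q} * (s/2) ≤ (3/4) a s
          have h9 : (μ^2+r^2)^q * r ≤ (μ^2+s^2)^q * (4:ℝ)^(-q) * (s/2) := by
            calc (μ^2+r^2)^q * r ≤ (μ^2+(s/2)^2)^q * (s/2) := hm
              _ ≤ ((μ^2+s^2)/4)^q * (s/2) := mul_le_mul_of_nonneg_right h2 (by linarith)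
              _ = (μ^2+s^2)^q * (4:ℝ)^(-q) * (s/2) := by rw [h3]
          have h10 : (μ^2+s^2)^q * (4:ℝ)^(-q) * (s/2) ≤ (3/4) * ((μ^2+s^2)^q * s) := by
            have := mul_le_mul_of_nonneg_left h4 ha.le
            nlinarith [mul_le_mul_of_nonneg_right this (by linarith : (0:ℝ) ≤ s/2)]
          nlinarith [mul_nonneg ha.le hr]
        · -- s/2 < r : tangent argument
          obtain ⟨β, hβ⟩ : ∃ β : ℝ, β = -q := ⟨_, rfl⟩
          have hβ0 : 0 < β := by rw [hβ]; linarith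
          have hβ4 : β ≤ 1/4 := by rw [hβ]; linarith
          have hP : (0:ℝ) < (μ^2+r^2)^β := rpow_pos_of_pos hb0 β
          have hQ : (0:ℝ) < (μ^2+s^2)^β := rpow_pos_of_pos hB β
          have hR : (0:ℝ) < (μ^2+r^2)^(β-1) := rpow_pos_of_pos hb0 _
          have hRP : (μ^2+r^2)^(β-1) * (μ^2+r^2) = (μ^2+r^2)^β := by
            rw [Real.rpow_sub_one hb0.ne']; field_simp
          have hbP : (μ^2+r^2)^q * (μ^2+r^2)^β = 1 := by
            rw [← Real.rpow_add hb0, hβ]; norm_num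
          have haQ : (μ^2+s^2)^q * (μ^2+s^2)^β = 1 := by
            rw [← Real.rpow_add hB, hβ]; norm_num
          have T := aux_tangent_le hβ0.le (by linarith) hb0 hB.le
          -- T : (μ^2+s^2)^β ≤ (μ^2+r^2)^β + β*(μ^2+r^2)^(β-1)*((μ^2+s^2)-(μ^2+r^2))
          have hfinal : r * (μ^2+s^2)^β ≤ (r + (3/4)*(s-r)) * (μ^2+r^2)^β := by
            have hTr := mul_le_mul_of_nonneg_left T hr0.le
            -- r*Q ≤ r*P + β*r*R*(s²-r²)
            have key2 : β * (r * ((μ^2+r^2)^(β-1) * (s^2 - r^2)))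
                ≤ (3/4)*(s-r) * (μ^2+r^2)^β := by
              have t0 : (0:ℝ) ≤ r * (μ^2+r^2)^(β-1) := by positivity
              have t1 : r * ((μ^2+r^2)^(β-1) * (s^2 - r^2))
                  ≤ r * ((μ^2+r^2)^(β-1) * ((3*r)*(s-r))) := by
                apply mul_le_mul_of_nonneg_left _ hr0.le
                apply mul_le_mul_of_nonneg_left _ hR.le
                nlinarith
              have t2 : β * (r * ((μ^2+r^2)^(β-1) * (s^2 - r^2)))
                  ≤ (1/4) * (r * ((μ^2+r^2)^(β-1) * ((3*r)*(s-r)))) := by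
                have t3 : (0:ℝ) ≤ r * ((μ^2+r^2)^(β-1) * (s^2 - r^2)) := by
                  apply mul_nonneg hr0.le
                  apply mul_nonneg hR.le
                  nlinarith
                calc β * (r * ((μ^2+r^2)^(β-1) * (s^2 - r^2)))
                    ≤ (1/4) * (r * ((μ^2+r^2)^(β-1) * (s^2 - r^2))) :=
                      mul_le_mul_of_nonneg_right hβ4 t3
                  _ ≤ (1/4) * (r * ((μ^2+r^2)^(β-1) * ((3*r)*(s-r)))) := by linarith [t1]
              have t4 : (1/4) * (r * ((μ^2+r^2)^(β-1) * ((3*r)*(s-r))))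
                  ≤ (3/4)*(s-r) * (μ^2+r^2)^β := by
                have t5 : r^2 * (μ^2+r^2)^(β-1) ≤ (μ^2+r^2) * (μ^2+r^2)^(β-1) := by
                  apply mul_le_mul_of_nonneg_right _ hR.le
                  nlinarith
                have t6 : (μ^2+r^2) * (μ^2+r^2)^(β-1) = (μ^2+r^2)^β := by
                  rw [mul_comm]; exact hRP
                nlinarith [mul_le_mul_of_nonneg_left (t6 ▸ t5) (show (0:ℝ) ≤ (3/4)*(s-r) by linarith)]
              linarith [t2, t4]
            nlinarith [hTr, key2]
          -- convert multiplicative identity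
          have hPQ : (0:ℝ) < (μ^2+r^2)^β * (μ^2+s^2)^β := by positivity
          have hmul : ((μ^2+r^2)^q * r) * ((μ^2+r^2)^β * (μ^2+s^2)^β)
              ≤ ((μ^2+s^2)^q * (r + (3/4)*(s-r))) * ((μ^2+r^2)^β * (μ^2+s^2)^β) := by
            have e1 : ((μ^2+r^2)^q * r) * ((μ^2+r^2)^β * (μ^2+s^2)^β)
                = r * (μ^2+s^2)^β := by
              calc ((μ^2+r^2)^q * r) * ((μ^2+r^2)^β * (μ^2+s^2)^β)
                  = ((μ^2+r^2)^q * (μ^2+r^2)^β) * (r * (μ^2+s^2)^β) := by ring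
                _ = r * (μ^2+s^2)^β := by rw [hbP, one_mul]
            have e2 : ((μ^2+s^2)^q * (r + (3/4)*(s-r))) * ((μ^2+r^2)^β * (μ^2+s^2)^β)
                = (r + (3/4)*(s-r)) * (μ^2+r^2)^β := by
              calc ((μ^2+s^2)^q * (r + (3/4)*(s-r))) * ((μ^2+r^2)^β * (μ^2+s^2)^β)
                  = ((μ^2+s^2)^q * (μ^2+s^2)^β) * ((r + (3/4)*(s-r)) * (μ^2+r^2)^β) := by ring
                _ = (r + (3/4)*(s-r)) * (μ^2+r^2)^β := by rw [haQ, one_mul]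
            rw [e1, e2]; exact hfinal
          have hkey : (μ^2+r^2)^q * r ≤ (μ^2+s^2)^q * (r + (3/4)*(s-r)) :=
            le_of_mul_le_mul_right hmul hPQ
          nlinarith [hkey]
      · -- upper bound (CU = 1)
        have := mul_le_mul_of_nonneg_right hab hr
        nlinarith [this]

lemma aux_normsq {n : ℕ} (a b : ℝ) (ha : 0 ≤ a) (hb : 0 ≤ b) (ξ η : EuclideanSpace ℝ (Fin n)) :
    ‖a • ξ - b • η‖ ^ 2
      = a^2 * ‖ξ‖^2 + b^2 * ‖η‖^2 - 2*(a*b)*(inner ℝ ξ η : ℝ) := by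
  rw [norm_sub_sq_real, norm_smul, norm_smul, real_inner_smul_left, real_inner_smul_right]
  simp only [Real.norm_eq_abs, abs_of_nonneg ha, abs_of_nonneg hb, mul_pow]
  ring

lemma aux_kappa (e : ℝ) : ∃ κ ≥ (1:ℝ), ∀ x y : ℝ, 0 < x → x ≤ y → y ≤ 2*x →
    y ^ e ≤ κ * x ^ e ∧ x ^ e ≤ κ * y ^ e := by
  refine ⟨2 ^ |e|, Real.one_le_rpow (by norm_num) (abs_nonneg e), ?_⟩
  intro x y hx hxy hy2
  have hy : (0:ℝ) < y := lt_of_lt_of_le hx hxy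
  rcases le_or_gt 0 e with he | he
  · rw [abs_of_nonneg he]
    constructor
    · calc y ^ e ≤ (2*x) ^ e := Real.rpow_le_rpow hy.le hy2 he
        _ = 2 ^ e * x ^ e := Real.mul_rpow (by norm_num) hx.le
    · have h1 : x ^ e ≤ y ^ e := Real.rpow_le_rpow hx.le hxy he
      have h2 : (1:ℝ) ≤ 2 ^ e := Real.one_le_rpow (by norm_num) he
      nlinarith [Real.rpow_nonneg hy.le e]
  · rw [abs_of_neg he]
    constructor
    · have h1 : y ^ e ≤ x ^ e := Real.rpow_le_rpow_of_nonpos hx hxy he.le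
      have h2 : (1:ℝ) ≤ 2 ^ (-e) := Real.one_le_rpow (by norm_num) (by linarith)
      nlinarith [Real.rpow_nonneg hx.le e]
    · have h1 : x ^ e ≤ (y/2) ^ e :=
        Real.rpow_le_rpow_of_nonpos (by linarith) (by linarith) he.le
      have h2 : (y/2) ^ e = 2 ^ (-e) * y ^ e := by
        rw [Real.div_rpow hy.le (by norm_num), Real.rpow_neg (by norm_num), div_eq_mul_inv]
        ring
      linarith [h2 ▸ h1]

set_option maxHeartbeats 1000000 in
lemma aux_half (p : ℝ) (hp : 1 < p) : ∃ c > (0:ℝ), ∀ (n : ℕ) (μ : ℝ),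
    ∀ ξ η : EuclideanSpace ℝ (Fin n), ξ ≠ η → ‖η‖ ≤ ‖ξ‖ →
      c⁻¹ * (μ ^ 2 + ‖ξ‖ ^ 2 + ‖η‖ ^ 2) ^ ((p - 2) / 2) ≤
          ‖Vp p μ ξ - Vp p μ η‖ ^ 2 / ‖ξ - η‖ ^ 2 ∧
        ‖Vp p μ ξ - Vp p μ η‖ ^ 2 / ‖ξ - η‖ ^ 2 ≤
          c * (μ ^ 2 + ‖ξ‖ ^ 2 + ‖η‖ ^ 2) ^ ((p - 2) / 2) := by
  have hq : -(1/4) < (p-2)/4 := by linarith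
  obtain ⟨cL, hcL, CU, hCU, hcore⟩ := aux_core ((p-2)/4) hq
  obtain ⟨κ, hκ1, hκ⟩ := aux_kappa ((p-2)/2)
  have hκ0 : (0:ℝ) < κ := lt_of_lt_of_le one_pos hκ1
  obtain ⟨m, hmdef⟩ : ∃ m : ℝ, m = min (cL^2) (1/4) := ⟨_, rfl⟩
  have hm0 : 0 < m := hmdef ▸ lt_min (by positivity) (by norm_num)
  have hml : m ≤ cL^2 := hmdef ▸ min_le_left _ _
  have hm4 : m ≤ 1/4 := hmdef ▸ min_le_right _ _
  obtain ⟨M, hMdef⟩ : ∃ M : ℝ, M = CU^2 + 4 := ⟨_, rfl⟩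
  have hM0 : 0 < M := by rw [hMdef]; positivity
  have hMC : CU^2 ≤ M := by rw [hMdef]; linarith
  have hM4 : (4:ℝ) ≤ M := by rw [hMdef]; linarith [sq_nonneg CU]
  refine ⟨κ * (M + m⁻¹), by positivity, ?_⟩
  intro n μ ξ η hne hle
  have hr : (0:ℝ) ≤ ‖η‖ := norm_nonneg _
  have hs : (0:ℝ) < ‖ξ‖ := by
    rcases eq_or_lt_of_le (norm_nonneg ξ) with h0 | h0
    · exfalso
      have hξ : ξ = 0 := norm_eq_zero.1 h0.symm
      have hη : η = 0 := norm_eq_zero.1 (le_antisymm (by rw [← h0] at hle; exact hle) hr)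
      exact hne (by rw [hξ, hη])
    · exact h0
  have hB : (0:ℝ) < μ^2 + ‖ξ‖^2 := by positivity
  have hA : (0:ℝ) < μ^2 + ‖ξ‖^2 + ‖η‖^2 := by positivity
  obtain ⟨hk1, hk2⟩ := hκ (μ^2 + ‖ξ‖^2) (μ^2 + ‖ξ‖^2 + ‖η‖^2) hB
    (by linarith [sq_nonneg ‖η‖])
    (by linarith [pow_le_pow_left₀ hr hle 2, sq_nonneg μ])
  have hDpos : (0:ℝ) < ‖ξ - η‖^2 := by
    have h1 : ξ - η ≠ 0 := sub_ne_zero.2 hne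
    have h2 : 0 < ‖ξ - η‖ := norm_pos_iff.2 h1
    positivity
  have ha : (0:ℝ) < (μ^2 + ‖ξ‖^2) ^ ((p-2)/4) := rpow_pos_of_pos hB _
  have hb0 : (0:ℝ) ≤ μ^2 + ‖η‖^2 := by positivity
  have hb : (0:ℝ) ≤ (μ^2 + ‖η‖^2) ^ ((p-2)/4) := Real.rpow_nonneg hb0 _
  have hN : ‖Vp p μ ξ - Vp p μ η‖ ^ 2
      = ((μ^2 + ‖ξ‖^2) ^ ((p-2)/4))^2 * ‖ξ‖^2 + ((μ^2 + ‖η‖^2) ^ ((p-2)/4))^2 * ‖η‖^2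
        - 2*(((μ^2 + ‖ξ‖^2) ^ ((p-2)/4))*((μ^2 + ‖η‖^2) ^ ((p-2)/4)))*(inner ℝ ξ η : ℝ) := by
    have e : Vp p μ ξ - Vp p μ η
        = ((μ^2 + ‖ξ‖^2) ^ ((p-2)/4)) • ξ - ((μ^2 + ‖η‖^2) ^ ((p-2)/4)) • η := rfl
    rw [e, aux_normsq _ _ ha.le hb ξ η]
  have hD : ‖ξ - η‖ ^ 2 = ‖ξ‖^2 + ‖η‖^2 - 2*(inner ℝ ξ η : ℝ) := by
    rw [norm_sub_sq_real]; ring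
  have ht := abs_le.1 (abs_real_inner_le_norm ξ η)
  obtain ⟨hL, hU⟩ := hcore μ ‖ξ‖ ‖η‖ hr hle hs
  have hmono : (μ^2 + ‖η‖^2) ^ ((p-2)/4) * ‖η‖ ≤ (μ^2 + ‖ξ‖^2) ^ ((p-2)/4) * ‖ξ‖ :=
    aux_mono (by linarith) hr hle
  -- abbreviations via obtain
  obtain ⟨a, hadef⟩ : ∃ a : ℝ, a = (μ^2 + ‖ξ‖^2) ^ ((p-2)/4) := ⟨_, rfl⟩
  obtain ⟨b, hbdef⟩ : ∃ b : ℝ, b = (μ^2 + ‖η‖^2) ^ ((p-2)/4) := ⟨_, rfl⟩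
  rw [← hadef, ← hbdef] at hN hL hU hmono
  rw [← hadef] at ha
  rw [← hbdef] at hb
  obtain ⟨s, hsdef⟩ : ∃ s : ℝ, s = ‖ξ‖ := ⟨_, rfl⟩
  obtain ⟨r, hrdef⟩ : ∃ r : ℝ, r = ‖η‖ := ⟨_, rfl⟩
  obtain ⟨t, htdef⟩ : ∃ t : ℝ, t = (inner ℝ ξ η : ℝ) := ⟨_, rfl⟩
  rw [← hsdef, ← hrdef, ← htdef] at hN
  rw [← hsdef, ← hrdef, ← htdef] at hD
  rw [← hsdef, ← hrdef] at hL hU hmono hle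
  rw [← hsdef] at hs
  rw [← hrdef] at hr
  rw [← hsdef, ← hrdef, ← htdef] at ht
  obtain ⟨ht1, ht2⟩ := ht
  -- E-bounds
  have hsr : (0:ℝ) ≤ s - r := by linarith
  have h0LHS : (0:ℝ) ≤ cL * (a * (s - r)) := by positivity
  have h0ab : (0:ℝ) ≤ a * s - b * r := le_trans h0LHS hL
  have hE1 : m * (a*(s-r))^2 ≤ (a*s - b*r)^2 := by
    have h1 := pow_le_pow_left₀ h0LHS hL 2
    linarith [h1, mul_le_mul_of_nonneg_right hml (sq_nonneg (a*(s-r)))]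
  have hE3 : (a*s - b*r)^2 ≤ M * (a*(s-r))^2 := by
    have h1 := pow_le_pow_left₀ h0ab hU 2
    linarith [h1, mul_le_mul_of_nonneg_right hMC (sq_nonneg (a*(s-r)))]
  have hE2 : m * (a*(s+r))^2 ≤ (a*s + b*r)^2 := by
    have h1 : a*((s+r)/2) ≤ a*s + b*r := by
      linarith [mul_nonneg hb hr, mul_le_mul_of_nonneg_left (show (s+r)/2 ≤ s by linarith) ha.le]
    have h2 := pow_le_pow_left₀ (by positivity : (0:ℝ) ≤ a*((s+r)/2)) h1 2
    linarith [h2, mul_le_mul_of_nonneg_right hm4 (sq_nonneg (a*(s+r)))]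
  have hE4 : (a*s + b*r)^2 ≤ M * (a*(s+r))^2 := by
    have h1 : a*s + b*r ≤ 2*(a*(s+r)) := by
      linarith [hmono, mul_nonneg ha.le hr]
    have h2 := pow_le_pow_left₀ (by positivity : (0:ℝ) ≤ a*s + b*r) h1 2
    linarith [h2, mul_le_mul_of_nonneg_right hM4 (sq_nonneg (a*(s+r)))]
  -- N vs D
  have hND_low : m * a^2 * ‖ξ - η‖^2 ≤ ‖Vp p μ ξ - Vp p μ η‖^2 := by
    rw [hN, hD]
    rcases le_total (m * a^2) (a*b) with hc | hc
    · linarith [hE1, mul_nonneg (sub_nonneg.2 hc) (sub_nonneg.2 ht2)]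
    · linarith [hE2, mul_nonneg (sub_nonneg.2 hc) (show (0:ℝ) ≤ t + s*r by linarith)]
  have hND_up : ‖Vp p μ ξ - Vp p μ η‖^2 ≤ M * a^2 * ‖ξ - η‖^2 := by
    rw [hN, hD]
    rcases le_total (a*b) (M * a^2) with hc | hc
    · linarith [hE3, mul_nonneg (sub_nonneg.2 hc) (sub_nonneg.2 ht2)]
    · linarith [hE4, mul_nonneg (sub_nonneg.2 hc) (show (0:ℝ) ≤ t + s*r by linarith)]
  have hdiv_low : m * a^2 ≤ ‖Vp p μ ξ - Vp p μ η‖^2 / ‖ξ - η‖^2 :=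
    (le_div_iff₀ hDpos).2 (by linarith)
  have hdiv_up : ‖Vp p μ ξ - Vp p μ η‖^2 / ‖ξ - η‖^2 ≤ M * a^2 :=
    (div_le_iff₀ hDpos).2 (by linarith)
  -- a^2 = B^((p-2)/2)
  have haB : a^2 = (μ^2 + ‖ξ‖^2) ^ ((p-2)/2) := by
    rw [hadef, ← Real.rpow_natCast ((μ^2 + ‖ξ‖^2) ^ ((p-2)/4)) 2, ← Real.rpow_mul hB.le]
    congr 1
    push_cast
    ring
  have hBe : (0:ℝ) ≤ (μ^2 + ‖ξ‖^2) ^ ((p-2)/2) := Real.rpow_nonneg hB.le _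
  have hAe : (0:ℝ) ≤ (μ^2 + ‖ξ‖^2 + ‖η‖^2) ^ ((p-2)/2) := Real.rpow_nonneg hA.le _
  have hminv : (M + m⁻¹)⁻¹ ≤ m := by
    have h1 : m⁻¹ ≤ M + m⁻¹ := by linarith
    have h2 := inv_anti₀ (inv_pos.2 hm0) h1
    rwa [inv_inv] at h2
  constructor
  · -- lower bound
    have h1 : (κ * (M + m⁻¹))⁻¹ * (μ^2 + ‖ξ‖^2 + ‖η‖^2) ^ ((p-2)/2)
        ≤ m * (μ^2 + ‖ξ‖^2) ^ ((p-2)/2) := by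
      have h2 : (κ * (M + m⁻¹))⁻¹ * (μ^2 + ‖ξ‖^2 + ‖η‖^2) ^ ((p-2)/2)
          ≤ (κ * (M + m⁻¹))⁻¹ * (κ * (μ^2 + ‖ξ‖^2) ^ ((p-2)/2)) :=
        mul_le_mul_of_nonneg_left hk1 (by positivity)
      have h3 : (κ * (M + m⁻¹))⁻¹ * (κ * (μ^2 + ‖ξ‖^2) ^ ((p-2)/2))
          = (M + m⁻¹)⁻¹ * (μ^2 + ‖ξ‖^2) ^ ((p-2)/2) := by
        rw [mul_inv]
        field_simp
      rw [h3] at h2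
      calc (κ * (M + m⁻¹))⁻¹ * (μ^2 + ‖ξ‖^2 + ‖η‖^2) ^ ((p-2)/2)
          ≤ (M + m⁻¹)⁻¹ * (μ^2 + ‖ξ‖^2) ^ ((p-2)/2) := h2
        _ ≤ m * (μ^2 + ‖ξ‖^2) ^ ((p-2)/2) := mul_le_mul_of_nonneg_right hminv hBe
    calc (κ * (M + m⁻¹))⁻¹ * (μ^2 + ‖ξ‖^2 + ‖η‖^2) ^ ((p-2)/2)
        ≤ m * (μ^2 + ‖ξ‖^2) ^ ((p-2)/2) := h1
      _ = m * a^2 := by rw [haB]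
      _ ≤ _ := hdiv_low
  · -- upper bound
    calc ‖Vp p μ ξ - Vp p μ η‖^2 / ‖ξ - η‖^2 ≤ M * a^2 := hdiv_up
      _ = M * (μ^2 + ‖ξ‖^2) ^ ((p-2)/2) := by rw [haB]
      _ ≤ M * (κ * (μ^2 + ‖ξ‖^2 + ‖η‖^2) ^ ((p-2)/2)) :=
          mul_le_mul_of_nonneg_left hk2 hM0.le
      _ ≤ κ * (M + m⁻¹) * (μ^2 + ‖ξ‖^2 + ‖η‖^2) ^ ((p-2)/2) := by
          linarith [mul_nonneg (mul_nonneg hκ0.le (inv_pos.2 hm0).le) hAe]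

/-- Lemma 2.1: for `1 < p < ∞` and `μ ∈ [0,1]` there is `c = c(n,p) > 0` such that
`c⁻¹ (μ²+|ξ|²+|η|²)^((p-2)/2) ≤ |V_p ξ - V_p η|²/|ξ-η|² ≤ c (μ²+|ξ|²+|η|²)^((p-2)/2)`. -/
theorem stmt0 (n : ℕ) (p : ℝ) (hp : 1 < p) :
    ∃ c > (0 : ℝ), ∀ μ : ℝ, 0 ≤ μ → μ ≤ 1 →
      ∀ ξ η : EuclideanSpace ℝ (Fin n), ξ ≠ η →
        c⁻¹ * (μ ^ 2 + ‖ξ‖ ^ 2 + ‖η‖ ^ 2) ^ ((p - 2) / 2) ≤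
            ‖Vp p μ ξ - Vp p μ η‖ ^ 2 / ‖ξ - η‖ ^ 2 ∧
          ‖Vp p μ ξ - Vp p μ η‖ ^ 2 / ‖ξ - η‖ ^ 2 ≤
            c * (μ ^ 2 + ‖ξ‖ ^ 2 + ‖η‖ ^ 2) ^ ((p - 2) / 2) := by
  obtain ⟨c, hc, h⟩ := aux_half p hp
  refine ⟨c, hc, ?_⟩
  intro μ _ _ ξ η hne
  rcases le_total ‖η‖ ‖ξ‖ with hle | hle
  · exact h n μ ξ η hne hle
  · have h2 := h n μ η ξ (Ne.symm hne) hle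
    rw [norm_sub_rev (Vp p μ η), norm_sub_rev η,
      show μ^2 + ‖η‖^2 + ‖ξ‖^2 = μ^2 + ‖ξ‖^2 + ‖η‖^2 by ring] at h2
    exact h2
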